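/- Let A be an abelian category and let f : A ⟶ B, g : A ⟶ C, h : B ⟶ D, k : C ⟶ D form a commutative quadrangle (f ≫ h = g ≫ k). Then the quadrangle is a pushout if and only if the induced morphism on kernels kernel g ⟶ kernel h is an epimorphism and the induced morphism on cokernels cokernel g ⟶ cokernel h is an isomorphism. -/
import Mathlib


open CategoryTheory CategoryTheory.Limits

/-- A commutative quadrangle `(f, g, h, k)` (with `f ≫ h = g ≫ k`) in an abelian category is a
*weak square* if its diagonal sequence `A ⟶ B ⊞ C ⟶ D`, with first morphism `biprod.lift f g`
and second morphism `biprod.desc h (-k)`, is exact at `B ⊞ C`. -/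
def IsWeakSquare {A : Type*} [Category A] [Abelian A] {W X Y Z : A}
    (f : W ⟶ X) (g : W ⟶ Y) (h : X ⟶ Z) (k : Y ⟶ Z) : Prop :=
  ∃ w : biprod.lift f g ≫ biprod.desc h (-k) = 0,
    (ShortComplex.mk (biprod.lift f g) (biprod.desc h (-k)) w).Exact

/-- A commutative quadrangle is a *pushout* if it is a weak square and the second morphism
`biprod.desc h (-k)` of its diagonal sequence is an epimorphism. -/
def IsPushoutSquare {A : Type*} [Category A] [Abelian A] {W X Y Z : A}
    (f : W ⟶ X) (g : W ⟶ Y) (h : X ⟶ Z) (k : Y ⟶ Z) : Prop :=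
  IsWeakSquare f g h k ∧ Epi (biprod.desc h (-k))

section Aux

variable {A : Type*} [Category A] [Abelian A] {W X Y Z : A}
    (f : W ⟶ X) (g : W ⟶ Y) (h : X ⟶ Z) (k : Y ⟶ Z) (comm : f ≫ h = g ≫ k)

private lemma comp_diag {T : A} (e : T ⟶ X ⊞ Y) :
    e ≫ biprod.desc h (-k) = (e ≫ biprod.fst) ≫ h - (e ≫ biprod.snd) ≫ k := by
  have : biprod.desc h (-k) = biprod.fst ≫ h - biprod.snd ≫ k := by
    apply biprod.hom_ext' <;> simp
  rw [this, Preadditive.comp_sub]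
  simp only [Category.assoc]

include comm in
private lemma lift_diag_zero : biprod.lift f g ≫ biprod.desc h (-k) = 0 := by
  rw [biprod.lift_desc, comm, Preadditive.comp_neg, add_neg_cancel]

include comm in
private lemma weakSquare_iff (w1 : (kernel.ι g ≫ f) ≫ h = 0) (w2 : g ≫ k ≫ cokernel.π h = 0) :
    IsWeakSquare f g h k ↔
      (Epi (kernel.lift h (kernel.ι g ≫ f) w1) ∧
        Mono (cokernel.desc g (k ≫ cokernel.π h) w2)) := by
  set κ := kernel.lift h (kernel.ι g ≫ f) w1 with hκdef
  set γ := cokernel.desc g (k ≫ cokernel.π h) w2 with hγdef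
  have hκι : κ ≫ kernel.ι h = kernel.ι g ≫ f := kernel.lift_ι _ _ _
  have hπγ : cokernel.π g ≫ γ = k ≫ cokernel.π h := cokernel.π_desc _ _ _
  have exg : (ShortComplex.mk g (cokernel.π g) (cokernel.condition g)).Exact :=
    ShortComplex.exact_of_g_is_cokernel _ (cokernelIsCokernel g)
  have exh : (ShortComplex.mk h (cokernel.π h) (cokernel.condition h)).Exact :=
    ShortComplex.exact_of_g_is_cokernel _ (cokernelIsCokernel h)
  constructor
  · rintro ⟨w, hex⟩
    constructor
    · -- κ is an epimorphism
      rw [epi_iff_surjective_up_to_refinements]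
      intro T c
      have hc : (biprod.lift (c ≫ kernel.ι h) 0 : T ⟶ X ⊞ Y) ≫ biprod.desc h (-k) = 0 := by
        rw [comp_diag]; simp
      obtain ⟨T', π, hπ, w', hw⟩ := hex.exact_up_to_refinements _ hc
      have h1 : π ≫ c ≫ kernel.ι h = w' ≫ f := by
        have := hw =≫ biprod.fst
        simpa using this
      have h2 : w' ≫ g = 0 := by
        have := hw =≫ biprod.snd
        simpa using this.symm
      refine ⟨T', π, hπ, kernel.lift g w' h2, ?_⟩
      rw [← cancel_mono (kernel.ι h), Category.assoc, Category.assoc, hκι, h1,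
        ← Category.assoc, kernel.lift_ι]
    · -- γ is a monomorphism
      rw [Preadditive.mono_iff_cancel_zero]
      intro T c hc
      obtain ⟨T₁, π₁, hπ₁, y, hy⟩ := surjective_up_to_refinements_of_epi (cokernel.π g) c
      have hy2 : (y ≫ k) ≫ cokernel.π h = 0 := by
        rw [Category.assoc, ← hπγ, ← Category.assoc, ← hy, Category.assoc, hc, comp_zero]
      obtain ⟨T₂, π₂, hπ₂, x, hx⟩ := exh.exact_up_to_refinements (y ≫ k) hy2
      have he : (biprod.lift x (π₂ ≫ y) : T₂ ⟶ X ⊞ Y) ≫ biprod.desc h (-k) = 0 := by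
        rw [comp_diag, biprod.lift_fst, biprod.lift_snd, ← hx, Category.assoc, sub_self]
      obtain ⟨T₃, π₃, hπ₃, w', hw⟩ := hex.exact_up_to_refinements _ he
      have h2 : π₃ ≫ π₂ ≫ y = w' ≫ g := by
        have := hw =≫ biprod.snd
        simpa using this
      have h2' := h2 =≫ cokernel.π g
      simp only [Category.assoc] at h2'
      have hz : (π₃ ≫ π₂ ≫ π₁) ≫ c = 0 := by
        simp only [Category.assoc]
        rw [hy, h2', cokernel.condition, comp_zero]
      haveI : Epi (π₃ ≫ π₂ ≫ π₁) := epi_comp _ _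
      rw [← cancel_epi (π₃ ≫ π₂ ≫ π₁), hz, comp_zero]
  · rintro ⟨hκe, hγm⟩
    refine ⟨lift_diag_zero f g h k comm, ?_⟩
    rw [ShortComplex.exact_iff_exact_up_to_refinements]
    intro T e he
    have hxy : (e ≫ biprod.fst) ≫ h = (e ≫ biprod.snd) ≫ k := by
      have := comp_diag h k e
      rw [show e ≫ biprod.desc h (-k) = 0 from he] at this
      exact sub_eq_zero.1 this.symm
    have hy0 : (e ≫ biprod.snd) ≫ cokernel.π g = 0 := by
      have h5 : ((e ≫ biprod.snd) ≫ cokernel.π g) ≫ γ = 0 := by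
        rw [Category.assoc, hπγ, ← Category.assoc, ← hxy, Category.assoc,
          cokernel.condition, comp_zero]
      exact zero_of_comp_mono γ h5
    obtain ⟨T₁, π₁, hπ₁, w, hw⟩ := exg.exact_up_to_refinements (e ≫ biprod.snd) hy0
    have hch : (π₁ ≫ (e ≫ biprod.fst) - w ≫ f) ≫ h = 0 := by
      rw [Preadditive.sub_comp, Category.assoc, hxy, ← Category.assoc, hw, Category.assoc,
        Category.assoc, comm, sub_self]
    obtain ⟨T₂, π₂, hπ₂, a, ha⟩ :=
      (epi_iff_surjective_up_to_refinements κ).1 hκe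
        (kernel.lift h (π₁ ≫ (e ≫ biprod.fst) - w ≫ f) hch)
    have h3 : π₂ ≫ (π₁ ≫ (e ≫ biprod.fst) - w ≫ f) = a ≫ kernel.ι g ≫ f := by
      have h4 := ha =≫ kernel.ι h
      simpa only [Category.assoc, kernel.lift_ι, hκι] using h4
    rw [Preadditive.comp_sub] at h3
    simp only [Category.assoc] at h3
    have hcomp : (π₂ ≫ w + a ≫ kernel.ι g) ≫ f = π₂ ≫ π₁ ≫ e ≫ biprod.fst := by
      simp only [Preadditive.add_comp, Category.assoc]
      rw [← h3]
      abel
    have hcomp2 : (π₂ ≫ w + a ≫ kernel.ι g) ≫ g = π₂ ≫ π₁ ≫ e ≫ biprod.snd := by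
      simp only [Preadditive.add_comp, Category.assoc, kernel.condition, comp_zero, add_zero]
      rw [← hw]
    refine ⟨T₂, π₂ ≫ π₁, epi_comp _ _, π₂ ≫ w + a ≫ kernel.ι g, ?_⟩
    apply biprod.hom_ext
    · simp only [Category.assoc, biprod.lift_fst]
      exact hcomp.symm
    · simp only [Category.assoc, biprod.lift_snd]
      exact hcomp2.symm

private lemma epi_diag_iff (w2 : g ≫ k ≫ cokernel.π h = 0) :
    Epi (biprod.desc h (-k)) ↔ Epi (cokernel.desc g (k ≫ cokernel.π h) w2) := by
  set γ := cokernel.desc g (k ≫ cokernel.π h) w2 with hγdef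
  have hπγ : cokernel.π g ≫ γ = k ≫ cokernel.π h := cokernel.π_desc _ _ _
  have exh : (ShortComplex.mk h (cokernel.π h) (cokernel.condition h)).Exact :=
    ShortComplex.exact_of_g_is_cokernel _ (cokernelIsCokernel h)
  have step : Epi γ ↔ Epi (k ≫ cokernel.π h) := by
    constructor
    · intro hγ
      rw [← hπγ]
      exact @epi_comp _ _ _ _ _ _ inferInstance _ hγ
    · intro hk
      rw [← hπγ] at hk
      exact @epi_of_epi _ _ _ _ _ _ _ hk
  rw [step]
  constructor
  · intro hd
    rw [epi_iff_surjective_up_to_refinements]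
    intro T c
    obtain ⟨T₁, π₁, hπ₁, z, hz⟩ := surjective_up_to_refinements_of_epi (cokernel.π h) c
    obtain ⟨T₂, π₂, hπ₂, e, he⟩ := surjective_up_to_refinements_of_epi (biprod.desc h (-k)) z
    refine ⟨T₂, π₂ ≫ π₁, epi_comp _ _, -(e ≫ biprod.snd), ?_⟩
    rw [Category.assoc, hz, ← Category.assoc, he, comp_diag, Preadditive.sub_comp,
      Category.assoc, cokernel.condition, comp_zero, zero_sub, Preadditive.neg_comp,
      Category.assoc]
  · intro hk
    rw [epi_iff_surjective_up_to_refinements]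
    intro T z
    obtain ⟨T₁, π₁, hπ₁, y, hy⟩ :=
      (epi_iff_surjective_up_to_refinements (k ≫ cokernel.π h)).1 hk (z ≫ cokernel.π h)
    have hz2 : (π₁ ≫ z - y ≫ k) ≫ cokernel.π h = 0 := by
      rw [Preadditive.sub_comp, Category.assoc, hy, Category.assoc, sub_self]
    obtain ⟨T₂, π₂, hπ₂, x, hx⟩ := exh.exact_up_to_refinements _ hz2
    refine ⟨T₂, π₂ ≫ π₁, epi_comp _ _, biprod.lift x (-(π₂ ≫ y)), ?_⟩
    rw [comp_diag, biprod.lift_fst, biprod.lift_snd, Preadditive.neg_comp, sub_neg_eq_add,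
      ← hx, Preadditive.comp_sub]
    simp only [Category.assoc]
    abel

end Aux

/-- A commutative quadrangle is a pushout if and only if the induced morphism on kernels
`kernel g ⟶ kernel h` is an epimorphism and the induced morphism on cokernels
`cokernel g ⟶ cokernel h` is an isomorphism. -/
theorem pushout_iff_epi_kernelMap_and_isIso_cokernelMap
    {A : Type*} [Category A] [Abelian A] {W X Y Z : A}
    (f : W ⟶ X) (g : W ⟶ Y) (h : X ⟶ Z) (k : Y ⟶ Z) (comm : f ≫ h = g ≫ k) :
    IsPushoutSquare f g h k ↔
      (Epi (kernel.lift h (kernel.ι g ≫ f)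
          (by rw [Category.assoc, comm, ← Category.assoc, kernel.condition, zero_comp])) ∧
       IsIso (cokernel.desc g (k ≫ cokernel.π h)
          (by rw [← Category.assoc, ← comm, Category.assoc, cokernel.condition, comp_zero]))) := by
  have w1 : (kernel.ι g ≫ f) ≫ h = 0 := by
    rw [Category.assoc, comm, ← Category.assoc, kernel.condition, zero_comp]
  have w2 : g ≫ k ≫ cokernel.π h = 0 := by
    rw [← Category.assoc, ← comm, Category.assoc, cokernel.condition, comp_zero]
  constructor
  · rintro ⟨hws, hd⟩
    obtain ⟨hκ, hγm⟩ := (weakSquare_iff f g h k comm w1 w2).1 hws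
    have hγe : Epi (cokernel.desc g (k ≫ cokernel.π h) w2) :=
      (epi_diag_iff g h k w2).1 hd
    exact ⟨hκ, @isIso_of_mono_of_epi _ _ _ _ _ _ hγm hγe⟩
  · rintro ⟨hκ, hγi⟩
    haveI := hγi
    refine ⟨(weakSquare_iff f g h k comm w1 w2).2 ⟨hκ, inferInstance⟩,
      (epi_diag_iff g h k w2).2 inferInstance⟩
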